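/- For nonnegative integers n, k, r with n ≥ k, S_2(n,k|2r) = Σ_{m=k}^{n} (-1)^{n-m} S_2(n,m) L_r(m,k), where S_2(n,k|x) = Σ_{j=k}^{n} C(n,j) x^{n-j} S_2(j,k) is the Stirling polynomial of the second kind. -/

import Mathlib

open Finset

/-- The `r`-Lah numbers `L_r(n,k) = (n!/k!) * C(n+2r-1, k+2r-1)` for `k ≤ n`, and `0` otherwise. -/
def rLah (r n k : ℕ) : ℕ :=
  if k ≤ n then n.factorial / k.factorial * Nat.choose (n + 2 * r - 1) (n - k) else 0

/-- Stirling numbers of the second kind. -/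
def stirling2 : ℕ → ℕ → ℕ
  | 0, 0 => 1
  | 0, _ + 1 => 0
  | _ + 1, 0 => 0
  | n + 1, k + 1 => (k + 1) * stirling2 n (k + 1) + stirling2 n k

/-- Signed Stirling numbers of the first kind, satisfying `(x)_n = Σ_k s(n,k) x^k`. -/
def stirling1 : ℕ → ℕ → ℤ
  | 0, 0 => 1
  | 0, _ + 1 => 0
  | _ + 1, 0 => 0
  | n + 1, k + 1 => stirling1 n k - (n : ℤ) * stirling1 n (k + 1)

/-- Bell numbers. -/
def bell (n : ℕ) : ℕ := ∑ k ∈ Finset.range (n + 1), stirling2 n k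

/-- The `r`-extended Bell numbers `B_{n,r} = Σ_k C(n,k) r^(n-k) B_k`. -/
def bellExt (n r : ℕ) : ℕ :=
  ∑ k ∈ Finset.range (n + 1), Nat.choose n k * r ^ (n - k) * bell k

/-- The `r`-extended Lah-Bell numbers `B^L_{n,r} = Σ_{k=0}^n L_r(n,k)`. -/
def lahBellExt (n r : ℕ) : ℕ := ∑ k ∈ Finset.range (n + 1), rLah r n k

/-- Stirling polynomials of the second kind `S₂(n,k|x) = Σ_j C(n,j) x^(n-j) S₂(j,k)`,
evaluated at a natural number `x`. -/
def stirling2Poly (n k x : ℕ) : ℕ :=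
  ∑ j ∈ Finset.Icc k n, Nat.choose n j * x ^ (n - j) * stirling2 j k

lemma stirling2_eq_zero_of_lt : ∀ (n k : ℕ), n < k → stirling2 n k = 0
  | 0, _+1, _ => rfl
  | n+1, k+1, h => by
    have h1 := stirling2_eq_zero_of_lt n (k+1) (by omega)
    have h2 := stirling2_eq_zero_of_lt n k (by omega)
    show (k + 1) * stirling2 n (k + 1) + stirling2 n k = 0
    simp [h1, h2]

lemma rLah_eq_zero {n k : ℕ} (r : ℕ) (h : n < k) : rLah r n k = 0 := by
  rw [rLah, if_neg (by omega)]

lemma rLah_eq {n k : ℕ} (h : k ≤ n) (r : ℕ) :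
    rLah r n k = n.descFactorial (n - k) * Nat.choose (n + 2 * r - 1) (n - k) := by
  rw [rLah, if_pos h, Nat.descFactorial_eq_div (Nat.sub_le n k), Nat.sub_sub_self h]

lemma rLah_succ_zero (r n : ℕ) : rLah r (n+1) 0 = (n + 2*r) * rLah r n 0 := by
  rw [rLah_eq (Nat.zero_le _), rLah_eq (Nat.zero_le _)]
  simp only [Nat.sub_zero]
  rcases Nat.eq_zero_or_pos (n + 2*r) with h | h
  · have hn : n = 0 := by omega
    have hr : r = 0 := by omega
    subst hn; subst hr; rfl
  · have h1 : n + 1 + 2*r - 1 = (n + 2*r - 1) + 1 := by omega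
    rw [h1, Nat.succ_descFactorial_succ]
    have h2 := Nat.add_one_mul_choose_eq (n + 2*r - 1) n
    have h3 : (n + 2*r - 1).succ = n + 2*r := by omega
    rw [Nat.succ_eq_add_one] at h3
    rw [h3] at h2
    have e6 : n + 2*r - 1 + 1 = n + 2*r := by omega
    rw [e6]
    zify at h2 ⊢
    linear_combination (-(Nat.descFactorial n n : ℤ)) * h2

lemma rLah_succ_succ (r n k : ℕ) :
    rLah r (n+1) (k+1) = rLah r n k + (n + (k+1) + 2*r) * rLah r n (k+1) := by
  rcases lt_trichotomy n k with h | h | h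
  · rw [rLah_eq_zero r (by omega), rLah_eq_zero r h, rLah_eq_zero r (by omega)]
    simp
  · subst h
    rw [rLah_eq (le_refl _), rLah_eq (le_refl _), rLah_eq_zero r (by omega)]
    simp
  · -- k + 1 ≤ n
    have hk1 : k + 1 ≤ n := h
    rw [rLah_eq (by omega), rLah_eq (by omega), rLah_eq (by omega)]
    set j : ℕ := n - (k+1) with hj
    have e1 : n + 1 - (k+1) = j + 1 := by omega
    have e2 : n - k = j + 1 := by omega
    rw [e1, e2, Nat.succ_descFactorial_succ, Nat.descFactorial_succ]
    have e3 : n - j = k + 1 := by omega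
    rw [e3]
    set N : ℕ := n + 2*r - 1 with hN
    have e4 : n + 1 + 2*r - 1 = N + 1 := by omega
    rw [e4]
    have pascal : Nat.choose (N+1) (j+1) = Nat.choose N j + Nat.choose N (j+1) :=
      Nat.choose_succ_succ N j
    have h2 := Nat.choose_succ_right_eq N j
    have e5 : N - j = 2*r + k := by omega
    rw [e5] at h2
    rw [pascal]
    have e6 : n = j + k + 1 := by omega
    zify at h2 e6 ⊢
    linear_combination ((Nat.descFactorial n j : ℤ)) * h2 + ((Nat.descFactorial n j : ℤ)) * ((N.choose (j+1) : ℤ)) * e6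

def auxS (r : ℕ) : ℕ → ℕ → ℕ
  | 0, 0 => 1
  | 0, _ + 1 => 0
  | n + 1, 0 => 2 * r * auxS r n 0
  | n + 1, k + 1 => auxS r n k + (2 * r + (k + 1)) * auxS r n (k + 1)

lemma A_eq (r : ℕ) : ∀ (n k : ℕ),
    (∑ j ∈ range (n+1), Nat.choose n j * (2*r)^(n-j) * stirling2 j k) = auxS r n k := by
  intro n
  induction n with
  | zero =>
    intro k
    cases k with
    | zero => simp [auxS, stirling2]
    | succ k => simp [auxS, stirling2_eq_zero_of_lt 0 (k+1) (by omega)]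
  | succ n ih =>
    intro k
    rw [Finset.sum_range_succ']
    have key : ∀ t ∈ range (n+1),
        Nat.choose (n+1) (t+1) * (2*r)^(n+1-(t+1)) * stirling2 (t+1) k
        = Nat.choose n t * (2*r)^(n-t) * stirling2 (t+1) k
          + Nat.choose n (t+1) * (2*r)^(n+1-(t+1)) * stirling2 (t+1) k := by
      intro t ht
      rw [Nat.choose_succ_succ]
      have e : n + 1 - (t+1) = n - t := by omega
      rw [e]; ring
    rw [Finset.sum_congr rfl key, Finset.sum_add_distrib]
    have second : (∑ t ∈ range (n+1), Nat.choose n (t+1) * (2*r)^(n+1-(t+1)) * stirling2 (t+1) k)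
        + Nat.choose (n+1) 0 * (2*r)^(n+1-0) * stirling2 0 k
        = 2*r * auxS r n k := by
      rw [← ih k, Finset.mul_sum]
      rw [Finset.sum_range_succ' (fun j => 2*r * (Nat.choose n j * (2*r)^(n-j) * stirling2 j k)) n]
      rw [Finset.sum_range_succ]
      have hAn : Nat.choose n (n+1) * (2*r)^(n+1-(n+1)) * stirling2 (n+1) k = 0 := by
        rw [Nat.choose_succ_self]; ring
      rw [hAn]
      have hsum : ∑ x ∈ range n, Nat.choose n (x+1) * (2*r)^(n+1-(x+1)) * stirling2 (x+1) k
          = ∑ x ∈ range n, 2*r * (Nat.choose n (x+1) * (2*r)^(n-(x+1)) * stirling2 (x+1) k) := by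
        apply Finset.sum_congr rfl
        intro t ht
        have ht' : t < n := mem_range.mp ht
        have e : n + 1 - (t+1) = (n - (t+1)) + 1 := by omega
        rw [e, pow_succ]; ring
      rw [hsum]
      have e : n + 1 - 0 = (n - 0) + 1 := by omega
      rw [e, pow_succ]
      simp only [Nat.choose_zero_right]
      ring
    cases k with
    | zero =>
      have first : (∑ t ∈ range (n+1), Nat.choose n t * (2*r)^(n-t) * stirling2 (t+1) 0) = 0 := by
        apply Finset.sum_eq_zero
        intro t ht
        show Nat.choose n t * (2*r)^(n-t) * stirling2 (t+1) 0 = 0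
        have : stirling2 (t+1) 0 = 0 := rfl
        rw [this, mul_zero]
      rw [add_assoc, first, second]
      simp [auxS]
    | succ k =>
      have first : (∑ t ∈ range (n+1), Nat.choose n t * (2*r)^(n-t) * stirling2 (t+1) (k+1))
          = (k+1) * auxS r n (k+1) + auxS r n k := by
        rw [← ih (k+1), ← ih k, Finset.mul_sum, ← Finset.sum_add_distrib]
        apply Finset.sum_congr rfl
        intro t ht
        have : stirling2 (t+1) (k+1) = (k+1) * stirling2 t (k+1) + stirling2 t k := rfl
        rw [this]; ring
      rw [add_assoc, first, second]
      show _ = auxS r n k + (2 * r + (k + 1)) * auxS r n (k + 1)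
      ring

lemma cancel_sum (n : ℕ) (F : ℕ → ℤ) :
    (∑ t ∈ range (n+1), (-1:ℤ)^(n-t) * ((t:ℤ)+1) * (stirling2 n (t+1) : ℤ) * F (t+1))
  = -∑ t ∈ range (n+1), (-1:ℤ)^(n-t) * (t:ℤ) * (stirling2 n t : ℤ) * F t := by
  have key : ∀ t ∈ range (n+1),
      (-1:ℤ)^(n-t) * ((t:ℤ)+1) * (stirling2 n (t+1) : ℤ) * F (t+1)
      = -((-1:ℤ)^(n-(t+1)) * ((t:ℤ)+1) * (stirling2 n (t+1) : ℤ) * F (t+1)) := by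
    intro t ht
    rcases eq_or_lt_of_le (Nat.lt_succ_iff.mp (mem_range.mp ht)) with h | h
    · subst h
      rw [stirling2_eq_zero_of_lt t (t+1) (by omega)]
      push_cast; ring
    · have e : n - t = (n - (t+1)) + 1 := by omega
      rw [e, pow_succ]; ring
  rw [Finset.sum_congr rfl key, Finset.sum_neg_distrib, neg_inj]
  have h0 := Finset.sum_range_succ' (fun m => (-1:ℤ)^(n-m) * (m:ℤ) * (stirling2 n m : ℤ) * F m) (n+1)
  have h1 := Finset.sum_range_succ (fun m => (-1:ℤ)^(n-m) * (m:ℤ) * (stirling2 n m : ℤ) * F m) (n+1)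
  have c0 : (-1:ℤ)^(n-0) * ((0:ℕ):ℤ) * (stirling2 n 0 : ℤ) * F 0 = 0 := by push_cast; ring
  have cn1 : (-1:ℤ)^(n-(n+1)) * ((n+1:ℕ):ℤ) * (stirling2 n (n+1) : ℤ) * F (n+1) = 0 := by
    rw [stirling2_eq_zero_of_lt n (n+1) (by omega)]; push_cast; ring
  push_cast at h0 h1 c0 cn1 ⊢
  linarith [h0, h1, c0, cn1]

lemma B_eq (r : ℕ) : ∀ (n k : ℕ),
    (∑ m ∈ range (n+1), (-1:ℤ)^(n-m) * (stirling2 n m : ℤ) * (rLah r m k : ℤ)) = auxS r n k := by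
  intro n
  induction n with
  | zero =>
    intro k
    rw [Finset.sum_range_one]
    cases k with
    | zero => simp [auxS, rLah, stirling2]
    | succ k => simp [auxS, rLah_eq_zero r (show (0:ℕ) < k+1 by omega)]
  | succ n ih =>
    intro k
    rw [Finset.sum_range_succ']
    have f0 : (-1:ℤ)^(n+1-0) * (stirling2 (n+1) 0 : ℤ) * (rLah r 0 k : ℤ) = 0 := by
      have h : stirling2 (n+1) 0 = 0 := rfl
      rw [h]; push_cast; ring
    rw [f0, add_zero]
    cases k with
    | zero =>
      have key : ∀ t ∈ range (n+1),
          (-1:ℤ)^(n+1-(t+1)) * (stirling2 (n+1) (t+1) : ℤ) * (rLah r (t+1) 0 : ℤ)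
          = (2*(r:ℤ)) * ((-1:ℤ)^(n-t) * (stirling2 n t : ℤ) * (rLah r t 0 : ℤ))
            + (-1:ℤ)^(n-t) * (t:ℤ) * (stirling2 n t : ℤ) * (rLah r t 0 : ℤ)
            + (-1:ℤ)^(n-t) * ((t:ℤ)+1) * (stirling2 n (t+1) : ℤ) * (rLah r (t+1) 0 : ℤ) := by
        intro t ht
        have e : n + 1 - (t+1) = n - t := by omega
        rw [e]
        have hs : stirling2 (n+1) (t+1) = (t+1) * stirling2 n (t+1) + stirling2 n t := rfl
        have hl := rLah_succ_zero r t
        rw [hs, hl]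
        push_cast
        ring
      rw [Finset.sum_congr rfl key, Finset.sum_add_distrib, Finset.sum_add_distrib]
      have hcd := cancel_sum n (fun m => (rLah r m 0 : ℤ))
      have hb : (∑ t ∈ range (n+1), (2*(r:ℤ)) * ((-1:ℤ)^(n-t) * (stirling2 n t : ℤ) * (rLah r t 0 : ℤ)))
          = 2*(r:ℤ) * auxS r n 0 := by rw [← Finset.mul_sum, ih 0]
      have hA : auxS r (n+1) 0 = 2*r*auxS r n 0 := rfl
      rw [hA]
      push_cast at hcd hb ⊢
      linear_combination hb + hcd
    | succ k =>
      have key : ∀ t ∈ range (n+1),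
          (-1:ℤ)^(n+1-(t+1)) * (stirling2 (n+1) (t+1) : ℤ) * (rLah r (t+1) (k+1) : ℤ)
          = ((-1:ℤ)^(n-t) * (stirling2 n t : ℤ) * (rLah r t k : ℤ))
            + (2*(r:ℤ) + ((k:ℤ)+1)) * ((-1:ℤ)^(n-t) * (stirling2 n t : ℤ) * (rLah r t (k+1) : ℤ))
            + (-1:ℤ)^(n-t) * (t:ℤ) * (stirling2 n t : ℤ) * (rLah r t (k+1) : ℤ)
            + (-1:ℤ)^(n-t) * ((t:ℤ)+1) * (stirling2 n (t+1) : ℤ) * (rLah r (t+1) (k+1) : ℤ) := by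
        intro t ht
        have e : n + 1 - (t+1) = n - t := by omega
        rw [e]
        have hs : stirling2 (n+1) (t+1) = (t+1) * stirling2 n (t+1) + stirling2 n t := rfl
        have hl := rLah_succ_succ r t k
        rw [hs, hl]
        push_cast
        ring
      rw [Finset.sum_congr rfl key, Finset.sum_add_distrib, Finset.sum_add_distrib,
        Finset.sum_add_distrib]
      have hcd := cancel_sum n (fun m => (rLah r m (k+1) : ℤ))
      have ha := ih k
      have hb : (∑ t ∈ range (n+1), (2*(r:ℤ) + ((k:ℤ)+1)) * ((-1:ℤ)^(n-t) * (stirling2 n t : ℤ) * (rLah r t (k+1) : ℤ)))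
          = (2*(r:ℤ) + ((k:ℤ)+1)) * auxS r n (k+1) := by rw [← Finset.mul_sum, ih (k+1)]
      have hA : auxS r (n+1) (k+1) = auxS r n k + (2*r + (k+1)) * auxS r n (k+1) := rfl
      rw [hA]
      push_cast at hcd ha hb ⊢
      linear_combination ha + hb + hcd


/-- `S₂(n,k|2r) = Σ_{m=k}^n (-1)^{n-m} S₂(n,m) L_r(m,k)`. -/
theorem stirling2Poly_eq_sum_stirling2_rLah (n k r : ℕ) (hkn : k ≤ n) :
    (stirling2Poly n k (2 * r) : ℤ) =
      ∑ m ∈ Finset.Icc k n,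
        (-1) ^ (n - m) * (stirling2 n m : ℤ) * (rLah r m k : ℤ) := by
  have hL : stirling2Poly n k (2*r) = ∑ j ∈ range (n+1), Nat.choose n j * (2*r)^(n-j) * stirling2 j k := by
    rw [stirling2Poly]
    apply Finset.sum_subset
    · intro j hj; rw [mem_Icc] at hj; exact mem_range.mpr (by omega)
    · intro j hj hj'
      rw [mem_range] at hj; rw [mem_Icc] at hj'
      rw [stirling2_eq_zero_of_lt j k (by omega), mul_zero]
  have hR : (∑ m ∈ Finset.Icc k n, (-1:ℤ)^(n-m) * (stirling2 n m : ℤ) * (rLah r m k : ℤ))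
      = ∑ m ∈ range (n+1), (-1:ℤ)^(n-m) * (stirling2 n m : ℤ) * (rLah r m k : ℤ) := by
    apply Finset.sum_subset
    · intro m hm; rw [mem_Icc] at hm; exact mem_range.mpr (by omega)
    · intro m hm hm'
      rw [mem_range] at hm; rw [mem_Icc] at hm'
      rw [rLah_eq_zero r (by omega)]
      push_cast; ring
  rw [hL, hR, B_eq r n k]
  exact_mod_cast A_eq r n k
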